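/- arXiv:1305.3337 — 4 statements merged into one kernel-verified Lean document; each statement's English description precedes it below -/
import Mathlib

section
/- Let f : ℝ → ℝ be C^3 with f(0) = f'(0) = 0 and f''(0) > 0, and let L(h) be the length of the sublevel interval {f < h} near 0. Then f''(0) = lim_{h→0+} 8h / L(h)^2. -/
open MeasureTheory Filter Topology

-- If g(0)=0, g'(0)=0, and g'' ≥ 0 on [-r,r], then g ≥ 0 on [-r,r].
lemma aux_nonneg (g g' g'' : ℝ → ℝ) (hg : ∀ x, HasDerivAt g (g' x) x)
    (hg' : ∀ x, HasDerivAt g' (g'' x) x) (h0 : g 0 = 0) (h1 : g' 0 = 0)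
    {r : ℝ} (hm : ∀ y ∈ Set.Icc (-r) r, 0 ≤ g'' y) :
    ∀ x ∈ Set.Icc (-r) r, 0 ≤ g x := by
  intro x hx
  have hmono : MonotoneOn g' (Set.Icc (-r) r) := by
    apply monotoneOn_of_deriv_nonneg (convex_Icc _ _)
      (fun y _ => (hg' y).continuousAt.continuousWithinAt)
      (fun y hy => ((hg' y).differentiableAt).differentiableWithinAt)
    intro y hy
    rw [(hg' y).deriv]
    exact hm y (interior_subset hy)
  have h0mem : (0:ℝ) ∈ Set.Icc (-r) r := by
    constructor <;> [linarith [hx.1, hx.2]; linarith [hx.1, hx.2]]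
  rcases le_total 0 x with hx0 | hx0
  · have hmono2 : MonotoneOn g (Set.Icc 0 x) := by
      apply monotoneOn_of_deriv_nonneg (convex_Icc _ _)
        (fun y _ => (hg y).continuousAt.continuousWithinAt)
        (fun y hy => ((hg y).differentiableAt).differentiableWithinAt)
      intro y hy
      rw [(hg y).deriv]
      rw [interior_Icc] at hy
      have hyI : y ∈ Set.Icc (-r) r := ⟨by linarith [hy.1, h0mem.1], by linarith [hy.2, hx.2]⟩
      have := hmono h0mem hyI (le_of_lt hy.1)
      linarith [this]
    have := hmono2 (Set.left_mem_Icc.2 hx0) (Set.right_mem_Icc.2 hx0) hx0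
    linarith [this]
  · have hmono2 : AntitoneOn g (Set.Icc x 0) := by
      apply antitoneOn_of_deriv_nonpos (convex_Icc _ _)
        (fun y _ => (hg y).continuousAt.continuousWithinAt)
        (fun y hy => ((hg y).differentiableAt).differentiableWithinAt)
      intro y hy
      rw [(hg y).deriv]
      rw [interior_Icc] at hy
      have hyI : y ∈ Set.Icc (-r) r := ⟨by linarith [hy.1, hx.1], by linarith [hy.2, h0mem.2]⟩
      have := hmono hyI h0mem (le_of_lt hy.2)
      linarith [this]
    have := hmono2 (Set.left_mem_Icc.2 hx0) (Set.right_mem_Icc.2 hx0) hx0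
    linarith [this]

lemma aux_deriv1 (f : ℝ → ℝ) (hf : ContDiff ℝ 3 f) (x : ℝ) :
    HasDerivAt f (deriv f x) x :=
  ((hf.differentiable (by norm_num)) x).hasDerivAt

lemma aux_deriv2 (f : ℝ → ℝ) (hf : ContDiff ℝ 3 f) (x : ℝ) :
    HasDerivAt (deriv f) (iteratedDeriv 2 f x) x := by
  have h : Differentiable ℝ (iteratedDeriv 1 f) :=
    hf.differentiable_iteratedDeriv 1 (by norm_num)
  rw [iteratedDeriv_one] at h
  have := (h x).hasDerivAt
  have h2 : iteratedDeriv 2 f x = deriv (deriv f) x := by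
    rw [show (2:ℕ) = 1 + 1 from rfl, iteratedDeriv_succ, iteratedDeriv_one]
  rw [h2]
  exact this

-- Taylor sandwich
lemma aux_lower (f : ℝ → ℝ) (hf : ContDiff ℝ 3 f) (h0 : f 0 = 0) (h1 : deriv f 0 = 0)
    {r m : ℝ} (hlow : ∀ y ∈ Set.Icc (-r) r, m ≤ iteratedDeriv 2 f y) :
    ∀ x ∈ Set.Icc (-r) r, m / 2 * x ^ 2 ≤ f x := by
  intro x hx
  have key := aux_nonneg (fun x => f x - m / 2 * x ^ 2) (fun x => deriv f x - m * x)
      (fun x => iteratedDeriv 2 f x - m)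
      (fun x => by
        have := (aux_deriv1 f hf x).sub (((hasDerivAt_pow 2 x).const_mul (m/2)))
        refine this.congr_deriv ?_
        push_cast; ring)
      (fun x => by
        have := (aux_deriv2 f hf x).sub ((hasDerivAt_id x).const_mul m)
        refine this.congr_deriv ?_
        ring)
      (by simp [h0]) (by simp [h1])
      (fun y hy => by have := hlow y hy; simp only [sub_nonneg]; linarith)
      x hx
  simp only [sub_nonneg] at key
  linarith

lemma aux_upper (f : ℝ → ℝ) (hf : ContDiff ℝ 3 f) (h0 : f 0 = 0) (h1 : deriv f 0 = 0)
    {r M : ℝ} (hhigh : ∀ y ∈ Set.Icc (-r) r, iteratedDeriv 2 f y ≤ M) :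
    ∀ x ∈ Set.Icc (-r) r, f x ≤ M / 2 * x ^ 2 := by
  intro x hx
  have key := aux_nonneg (fun x => M / 2 * x ^ 2 - f x) (fun x => M * x - deriv f x)
      (fun x => M - iteratedDeriv 2 f x)
      (fun x => by
        have := (((hasDerivAt_pow 2 x).const_mul (M/2))).sub (aux_deriv1 f hf x)
        refine this.congr_deriv ?_
        push_cast; ring)
      (fun x => by
        have := ((hasDerivAt_id x).const_mul M).sub (aux_deriv2 f hf x)
        refine this.congr_deriv ?_
        ring)
      (by simp [h0]) (by simp [h1])
      (fun y hy => by have := hhigh y hy; simp only [sub_nonneg]; linarith)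
      x hx
  simp only [sub_nonneg] at key
  linarith

set_option maxHeartbeats 1000000 in
theorem curvature_from_chord_length (f : ℝ → ℝ) (hf : ContDiff ℝ 3 f)
    (h0 : f 0 = 0) (h1 : deriv f 0 = 0) (h2 : 0 < iteratedDeriv 2 f 0) :
    ∃ δ > 0, (∀ x ∈ Set.Ioo (-δ) δ, 0 < iteratedDeriv 2 f x) ∧
      ∀ ε : ℝ, 0 < ε → ε ≤ δ →
        Tendsto
          (fun h : ℝ =>
            8 * h / ((volume (Set.Ioo (-ε) ε ∩ {x : ℝ | f x < h})).toReal) ^ 2)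
          (𝓝[>] 0)
          (𝓝 (iteratedDeriv 2 f 0)) := by
  set c := iteratedDeriv 2 f 0 with hc
  have hcont : Continuous (iteratedDeriv 2 f) := hf.continuous_iteratedDeriv 2 (by norm_num)
  have hca : ContinuousAt (iteratedDeriv 2 f) 0 := hcont.continuousAt
  rw [Metric.continuousAt_iff] at hca
  obtain ⟨δ₁, hδ₁, hδ₁p⟩ := hca (c/2) (by linarith)
  set δ := δ₁ / 2 with hδdef
  have hδ : 0 < δ := by positivity
  have hIcc : ∀ y ∈ Set.Icc (-δ) δ, c/2 ≤ iteratedDeriv 2 f y := by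
    intro y hy
    have : dist y 0 < δ₁ := by
      rw [Real.dist_eq, sub_zero, abs_lt]
      constructor <;> [linarith [hy.1]; linarith [hy.2]]
    have := hδ₁p this
    rw [Real.dist_eq, abs_lt] at this
    linarith [this.1]
  refine ⟨δ, hδ, fun x hx => lt_of_lt_of_le (by linarith) (hIcc x ⟨hx.1.le, hx.2.le⟩), ?_⟩
  intro ε hε hεδ
  rw [Metric.tendsto_nhds]
  intro η hη
  set η₀ := min (η/2) (c/2) with hη₀def
  have hη₀ : 0 < η₀ := lt_min (by linarith) (by linarith)
  have hη₀c : η₀ ≤ c/2 := min_le_right _ _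
  have hη₀η : η₀ ≤ η/2 := min_le_left _ _
  obtain ⟨δ₂, hδ₂, hδ₂p⟩ := hca η₀ hη₀
  set δ' := min (δ₂/2) ε with hδ'def
  have hδ' : 0 < δ' := lt_min (by positivity) hε
  have hδ'ε : δ' ≤ ε := min_le_right _ _
  have hIcc' : ∀ y ∈ Set.Icc (-δ') δ',
      c - η₀ ≤ iteratedDeriv 2 f y ∧ iteratedDeriv 2 f y ≤ c + η₀ := by
    intro y hy
    have hd : dist y 0 < δ₂ := by
      rw [Real.dist_eq, sub_zero, abs_lt]
      have h1 := hy.1; have h2 := hy.2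
      have : δ' ≤ δ₂/2 := min_le_left _ _
      constructor <;> linarith
    have := hδ₂p hd
    rw [Real.dist_eq, abs_lt] at this
    constructor <;> linarith [this.1, this.2]
  set h₀ := c * δ' ^ 2 / 4 with hh₀def
  have hh₀ : 0 < h₀ := by positivity
  filter_upwards [Ioo_mem_nhdsGT_of_mem (Set.mem_Ico.2 ⟨le_refl 0, hh₀⟩)] with h hh
  obtain ⟨hhpos, hhlt⟩ := hh
  have hcη₀ : 0 < c - η₀ := by linarith
  have hcη₀' : 0 < c + η₀ := by linarith
  set s := Real.sqrt (2 * h / (c + η₀)) with hsdef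
  set t := Real.sqrt (2 * h / (c - η₀)) with htdef
  have hs : 0 < s := Real.sqrt_pos.2 (by positivity)
  have ht : 0 < t := Real.sqrt_pos.2 (by positivity)
  have hs2 : s ^ 2 = 2 * h / (c + η₀) := Real.sq_sqrt (by positivity)
  have ht2 : t ^ 2 = 2 * h / (c - η₀) := Real.sq_sqrt (by positivity)
  have hsδ' : s < δ' := by
    rw [hsdef]
    have : 2 * h / (c + η₀) < δ' ^ 2 := by
      rw [div_lt_iff₀ hcη₀']
      nlinarith
    calc Real.sqrt (2 * h / (c + η₀)) < Real.sqrt (δ' ^ 2) :=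
          Real.sqrt_lt_sqrt (by positivity) this
      _ = δ' := by rw [Real.sqrt_sq hδ'.le]
  set S := Set.Ioo (-ε) ε ∩ {x : ℝ | f x < h} with hSdef
  -- lower inclusion
  have hlowInc : Set.Ioo (-s) s ⊆ S := by
    intro x hx
    have hxs : x ^ 2 < s ^ 2 := sq_lt_sq' hx.1 hx.2
    have hx1 := hx.1
    have hx2 := hx.2
    have hxδ' : x ∈ Set.Icc (-δ') δ' := ⟨by linarith, by linarith⟩
    constructor
    · exact ⟨by linarith, by linarith⟩
    · have := aux_upper f hf h0 h1 (fun y hy => (hIcc' y hy).2) x hxδ'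
      have heq : (c + η₀) / 2 * (2 * h / (c + η₀)) = h := by
        field_simp
      simp only [Set.mem_setOf_eq]
      calc f x ≤ (c + η₀) / 2 * x ^ 2 := this
        _ < (c + η₀) / 2 * s ^ 2 := by nlinarith
        _ = h := by rw [hs2, heq]
  -- upper inclusion
  have hupInc : S ⊆ Set.Ioo (-t) t := by
    rintro x ⟨hxε, hxf⟩
    simp only [Set.mem_setOf_eq] at hxf
    have hxδ : x ∈ Set.Icc (-δ) δ := by
      constructor <;> [linarith [hxε.1]; linarith [hxε.2]]
    have hbig := aux_lower f hf h0 h1 hIcc x hxδ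
    have hxδ' : x ∈ Set.Icc (-δ') δ' := by
      by_contra hcon
      simp only [Set.mem_Icc, not_and_or, not_le] at hcon
      have : δ' ^ 2 ≤ x ^ 2 := by
        rcases hcon with hc1 | hc1 <;> nlinarith
      nlinarith
    have := aux_lower f hf h0 h1 (fun y hy => (hIcc' y hy).1) x hxδ'
    have hxt : x ^ 2 < t ^ 2 := by
      rw [ht2]
      rw [lt_div_iff₀ hcη₀]
      nlinarith
    constructor <;> nlinarith
  -- measure computations
  have hvol1 : volume (Set.Ioo (-s) s) ≤ volume S := measure_mono hlowInc
  have hvol2 : volume S ≤ volume (Set.Ioo (-t) t) := measure_mono hupInc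
  rw [Real.volume_Ioo] at hvol1 hvol2
  set L := (volume S).toReal with hLdef
  have hfin : volume S ≠ ⊤ := by
    exact ne_top_of_le_ne_top ENNReal.ofReal_ne_top hvol2
  have hL2 : L ≤ 2 * t := by
    have := ENNReal.toReal_mono ENNReal.ofReal_ne_top hvol2
    rw [ENNReal.toReal_ofReal (by linarith)] at this
    linarith
  have hL1 : 2 * s ≤ L := by
    have := ENNReal.toReal_mono hfin hvol1
    rw [ENNReal.toReal_ofReal (by linarith)] at this
    linarith
  have hLpos : 0 < L := by linarith
  have hLsq : 0 < L ^ 2 := by positivity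
  have hub : 8 * h / L ^ 2 ≤ c + η₀ := by
    rw [div_le_iff₀ hLsq]
    have : 8 * h / (c + η₀) ≤ L ^ 2 := by
      calc 8 * h / (c + η₀) = 4 * (2 * h / (c + η₀)) := by ring
        _ = 4 * s ^ 2 := by rw [hs2]
        _ ≤ L ^ 2 := by nlinarith
    rw [div_le_iff₀ hcη₀'] at this
    linarith
  have hlb : c - η₀ ≤ 8 * h / L ^ 2 := by
    rw [le_div_iff₀ hLsq]
    have : L ^ 2 ≤ 8 * h / (c - η₀) := by
      calc L ^ 2 ≤ 4 * t ^ 2 := by nlinarith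
        _ = 4 * (2 * h / (c - η₀)) := by rw [ht2]
        _ = 8 * h / (c - η₀) := by ring
    rw [le_div_iff₀ hcη₀] at this
    linarith
  rw [Real.dist_eq, abs_lt]
  constructor <;> linarith
end

section
/- Let f : I → ℝ be a C^3 strictly convex function (f'' > 0) whose graph satisfies: for every point P = (x, f(x)) and every sufficiently small h > 0, the area S_P(h) cut off by the chord at normal distance h from P equals a·(h·√(1+f'(x)^2))^{3/2} for a fixed constant a > 0 independent of P. Then f'' is constant on I, i.e. f is a quadratic polynomial. -/
open MeasureTheory

/-- The line parallel to the tangent of the graph of `f` at `(x₀, f x₀)`,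
at normal distance `h` on the convex (upper) side, as a function of `x`. -/
noncomputable def chordLine (f : ℝ → ℝ) (x₀ h x : ℝ) : ℝ :=
  f x₀ + deriv f x₀ * (x - x₀) + h * Real.sqrt (1 + (deriv f x₀) ^ 2)

/-- The area of the region bounded by the graph of `f` (restricted to `I`)
and the chord parallel to the tangent at `(x₀, f x₀)` at normal distance `h`. -/
noncomputable def SP (f : ℝ → ℝ) (I : Set ℝ) (x₀ h : ℝ) : ℝ :=
  ∫ x in {x ∈ I | f x < chordLine f x₀ h x}, (chordLine f x₀ h x - f x)

open Set

variable {p q : ℝ} {f : ℝ → ℝ}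


lemma aux_hasDerivAt (hf : ContDiffOn ℝ 3 f (Ioo p q)) {x : ℝ} (hx : x ∈ Ioo p q) :
    HasDerivAt f (deriv f x) x :=
  ((hf.differentiableOn (by norm_num)).differentiableAt (isOpen_Ioo.mem_nhds hx)).hasDerivAt

lemma aux_hasDerivAt_deriv (hf : ContDiffOn ℝ 3 f (Ioo p q)) {x : ℝ} (hx : x ∈ Ioo p q) :
    HasDerivAt (deriv f) (iteratedDeriv 2 f x) x := by
  have h2 : ContDiffOn ℝ 2 (deriv f) (Ioo p q) :=
    hf.deriv_of_isOpen isOpen_Ioo (le_of_eq (by norm_num))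
  have hd : DifferentiableAt ℝ (deriv f) x :=
    (h2.differentiableOn (by norm_num)).differentiableAt (isOpen_Ioo.mem_nhds hx)
  have h22 : iteratedDeriv 2 f x = deriv (deriv f) x := by
    rw [iteratedDeriv_succ, iteratedDeriv_one]
  rw [h22]; exact hd.hasDerivAt

lemma aux_cont_iter2 (hf : ContDiffOn ℝ 3 f (Ioo p q)) :
    ContinuousOn (iteratedDeriv 2 f) (Ioo p q) := by
  have h2 : ContDiffOn ℝ 2 (deriv f) (Ioo p q) :=
    hf.deriv_of_isOpen isOpen_Ioo (le_of_eq (by norm_num))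
  have := h2.continuousOn_deriv_of_isOpen isOpen_Ioo (by norm_num)
  have h22 : iteratedDeriv 2 f = deriv (deriv f) := by
    rw [iteratedDeriv_succ, iteratedDeriv_one]
  rw [h22]; exact this

lemma aux_strictMono_deriv (hf : ContDiffOn ℝ 3 f (Ioo p q))
    (hconv : ∀ x ∈ Ioo p q, 0 < iteratedDeriv 2 f x) :
    StrictMonoOn (deriv f) (Ioo p q) := by
  refine strictMonoOn_of_deriv_pos (convex_Ioo p q)
    (fun x hx => (aux_hasDerivAt_deriv hf hx).continuousAt.continuousWithinAt) (fun x hx => ?_)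
  rw [interior_Ioo] at hx
  rw [(aux_hasDerivAt_deriv hf hx).deriv]
  exact hconv x hx

/-- monotone from pointwise derivative nonneg on an Icc -/
lemma aux_monoIcc {v V : ℝ → ℝ} {A B : ℝ} (hv : ∀ x ∈ Icc A B, HasDerivAt v (V x) x)
    (hV : ∀ x ∈ Icc A B, 0 ≤ V x) : MonotoneOn v (Icc A B) := by
  refine monotoneOn_of_deriv_nonneg (convex_Icc A B)
    (fun x hx => (hv x hx).continuousAt.continuousWithinAt)
    (fun x hx => ((hv x (interior_subset hx)).differentiableAt).differentiableWithinAt)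
    (fun x hx => ?_)
  rw [(hv x (interior_subset hx)).deriv]
  exact hV x (interior_subset hx)

lemma aux_antiIcc {v V : ℝ → ℝ} {A B : ℝ} (hv : ∀ x ∈ Icc A B, HasDerivAt v (V x) x)
    (hV : ∀ x ∈ Icc A B, V x ≤ 0) : AntitoneOn v (Icc A B) := by
  refine antitoneOn_of_deriv_nonpos (convex_Icc A B)
    (fun x hx => (hv x hx).continuousAt.continuousWithinAt)
    (fun x hx => ((hv x (interior_subset hx)).differentiableAt).differentiableWithinAt)
    (fun x hx => ?_)
  rw [(hv x (interior_subset hx)).deriv]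
  exact hV x (interior_subset hx)

/-- w(x₀)=0, w' ≤ 0 left of x₀ and ≥ 0 right of x₀ implies w ≥ 0 -/
lemma aux_nonneg_of_sign {w v : ℝ → ℝ} {x₀ η : ℝ} (hη : 0 ≤ η)
    (hw : ∀ x ∈ Icc (x₀ - η) (x₀ + η), HasDerivAt w (v x) x) (hw0 : w x₀ = 0)
    (hvr : ∀ x ∈ Icc (x₀ - η) (x₀ + η), x₀ ≤ x → 0 ≤ v x)
    (hvl : ∀ x ∈ Icc (x₀ - η) (x₀ + η), x ≤ x₀ → v x ≤ 0) :
    ∀ x ∈ Icc (x₀ - η) (x₀ + η), 0 ≤ w x := by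
  intro x hx
  rcases le_total x x₀ with hle | hle
  · have hmono : AntitoneOn w (Icc (x₀ - η) x₀) := by
      refine aux_antiIcc (fun y hy => hw y ⟨hy.1, by linarith [hy.2]⟩) (fun y hy => ?_)
      exact hvl y ⟨hy.1, by linarith [hy.2]⟩ hy.2
    have := hmono ⟨hx.1, hle⟩ ⟨by linarith, le_refl x₀⟩ hle
    linarith [hw0 ▸ this]
  · have hmono : MonotoneOn w (Icc x₀ (x₀ + η)) := by
      refine aux_monoIcc (fun y hy => hw y ⟨by linarith [hy.1], hy.2⟩) (fun y hy => ?_)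
      exact hvr y ⟨by linarith [hy.1], hy.2⟩ hy.1
    have := hmono ⟨le_refl x₀, by linarith⟩ ⟨hle, hx.2⟩ hle
    linarith [hw0 ▸ this]

lemma aux_taylor (hf : ContDiffOn ℝ 3 f (Ioo p q)) {x₀ : ℝ} (hx₀ : x₀ ∈ Ioo p q)
    {δ : ℝ} (hδ : 0 < δ) :
    ∃ η > 0, Icc (x₀ - η) (x₀ + η) ⊆ Ioo p q ∧
      ∀ x ∈ Icc (x₀ - η) (x₀ + η),
        (iteratedDeriv 2 f x₀ - δ) / 2 * (x - x₀) ^ 2 ≤ f x - f x₀ - deriv f x₀ * (x - x₀) ∧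
        f x - f x₀ - deriv f x₀ * (x - x₀) ≤ (iteratedDeriv 2 f x₀ + δ) / 2 * (x - x₀) ^ 2 := by
  set F := iteratedDeriv 2 f with hF
  set c := F x₀ with hc
  obtain ⟨η₁, hη₁, hball⟩ := Metric.isOpen_iff.1 isOpen_Ioo x₀ hx₀
  have hcont : ContinuousAt F x₀ :=
    (aux_cont_iter2 hf).continuousAt (isOpen_Ioo.mem_nhds hx₀)
  obtain ⟨η₂, hη₂, hFd⟩ := Metric.continuousAt_iff.1 hcont δ hδ
  set η : ℝ := min η₁ η₂ / 2 with hηdef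
  have hη : 0 < η := by positivity
  have hsub : Icc (x₀ - η) (x₀ + η) ⊆ Metric.ball x₀ (min η₁ η₂) := by
    intro x hx
    simp only [Metric.mem_ball, Real.dist_eq]
    have h1 : |x - x₀| ≤ η := abs_le.2 ⟨by linarith [hx.1], by linarith [hx.2]⟩
    have : η < min η₁ η₂ := by
      simp only [hηdef]; have := lt_min hη₁ hη₂
      cases' le_total η₁ η₂ with h h <;> simp [min_eq_left, min_eq_right, h] <;> linarith
    linarith
  have hsubI : Icc (x₀ - η) (x₀ + η) ⊆ Ioo p q := fun x hx =>
    hball (Metric.ball_subset_ball (min_le_left _ _) (hsub hx))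
  have hFb : ∀ x ∈ Icc (x₀ - η) (x₀ + η), c - δ ≤ F x ∧ F x ≤ c + δ := by
    intro x hx
    have := hFd (lt_of_lt_of_le (hsub hx) (min_le_right _ _))
    rw [Real.dist_eq, abs_lt] at this
    constructor <;> linarith [this.1, this.2]
  refine ⟨η, hη, hsubI, fun x hx => ?_⟩
  -- derivative helpers
  have hDf : ∀ y ∈ Icc (x₀ - η) (x₀ + η), HasDerivAt f (deriv f y) y := fun y hy =>
    aux_hasDerivAt hf (hsubI hy)
  have hDphi : ∀ y ∈ Icc (x₀ - η) (x₀ + η),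
      HasDerivAt (fun z => f z - f x₀ - deriv f x₀ * (z - x₀)) (deriv f y - deriv f x₀) y := by
    intro y hy
    have h1 := ((hDf y hy).sub_const (f x₀)).sub
      (((hasDerivAt_id y).sub_const x₀).const_mul (deriv f x₀))
    exact h1.congr_deriv (by ring)
  have hsq : ∀ (k : ℝ) (y : ℝ), HasDerivAt (fun z => k / 2 * (z - x₀) ^ 2) (k * (y - x₀)) y := by
    intro k y
    have h1 := (((hasDerivAt_id y).sub_const x₀).pow 2).const_mul (k / 2)
    exact h1.congr_deriv (by simp only [id_eq]; push_cast; ring)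
  have hDdf : ∀ y ∈ Icc (x₀ - η) (x₀ + η),
      HasDerivAt (fun z => deriv f z - deriv f x₀) (F y) y := fun y hy =>
    (aux_hasDerivAt_deriv hf (hsubI hy)).sub_const (deriv f x₀)
  constructor
  · -- lower bound
    set u := fun z => (f z - f x₀ - deriv f x₀ * (z - x₀)) - (c - δ) / 2 * (z - x₀) ^ 2 with hu
    set v := fun z => (deriv f z - deriv f x₀) - (c - δ) * (z - x₀) with hv
    have hw : ∀ y ∈ Icc (x₀ - η) (x₀ + η), HasDerivAt u (v y) y := fun y hy =>
      (hDphi y hy).sub (hsq (c - δ) y)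
    have hvmono : MonotoneOn v (Icc (x₀ - η) (x₀ + η)) := by
      refine aux_monoIcc (V := fun y => F y - (c - δ)) (fun y hy => ?_) (fun y hy => ?_)
      · have h1 := (hDdf y hy).sub (((hasDerivAt_id y).sub_const x₀).const_mul (c - δ))
        exact h1.congr_deriv (by ring)
      · show (0:ℝ) ≤ F y - (c - δ); linarith [(hFb y hy).1]
    have hv0 : v x₀ = 0 := by simp [hv]
    have hx₀mem : x₀ ∈ Icc (x₀ - η) (x₀ + η) := by
      constructor <;> linarith
    have := aux_nonneg_of_sign hη.le hw (by simp [hu])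
      (fun y hy hle => by have := hvmono hx₀mem hy hle; linarith [hv0 ▸ this])
      (fun y hy hle => by have := hvmono hy hx₀mem hle; linarith [hv0 ▸ this]) x hx
    simp only [hu] at this; linarith
  · -- upper bound
    set u := fun z => (c + δ) / 2 * (z - x₀) ^ 2 - (f z - f x₀ - deriv f x₀ * (z - x₀)) with hu
    set v := fun z => (c + δ) * (z - x₀) - (deriv f z - deriv f x₀) with hv
    have hw : ∀ y ∈ Icc (x₀ - η) (x₀ + η), HasDerivAt u (v y) y := fun y hy =>
      (hsq (c + δ) y).sub (hDphi y hy)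
    have hvmono : MonotoneOn v (Icc (x₀ - η) (x₀ + η)) := by
      refine aux_monoIcc (V := fun y => (c + δ) - F y) (fun y hy => ?_) (fun y hy => ?_)
      · have h1 := ((((hasDerivAt_id y).sub_const x₀).const_mul (c + δ))).sub (hDdf y hy)
        exact h1.congr_deriv (by ring)
      · show (0:ℝ) ≤ (c + δ) - F y; linarith [(hFb y hy).2]
    have hv0 : v x₀ = 0 := by simp [hv]
    have hx₀mem : x₀ ∈ Icc (x₀ - η) (x₀ + η) := by
      constructor <;> linarith
    have := aux_nonneg_of_sign hη.le hw (by simp [hu])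
      (fun y hy hle => by have := hvmono hx₀mem hy hle; linarith [hv0 ▸ this])
      (fun y hy hle => by have := hvmono hy hx₀mem hle; linarith [hv0 ▸ this]) x hx
    simp only [hu] at this; linarith

lemma aux_integral (x₀ d k r : ℝ) (hr : 0 ≤ r) :
    ∫ x in Ioo (x₀ - r) (x₀ + r), (d - k / 2 * (x - x₀) ^ 2) = 2 * d * r - k * r ^ 3 / 3 := by
  rw [← integral_Ioc_eq_integral_Ioo, ← intervalIntegral.integral_of_le (by linarith)]
  have h1 : (∫ x in (x₀ - r)..(x₀ + r), (d - k / 2 * (x - x₀) ^ 2))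
      = ∫ x in (x₀ - r - x₀)..(x₀ + r - x₀), (d - k / 2 * x ^ 2) :=
    (intervalIntegral.integral_comp_sub_right (fun y => d - k / 2 * y ^ 2) x₀)
  rw [h1, show x₀ - r - x₀ = -r by ring, show x₀ + r - x₀ = r by ring,
    intervalIntegral.integral_sub intervalIntegrable_const
      ((intervalIntegral.intervalIntegrable_pow 2).const_mul _),
    intervalIntegral.integral_const, intervalIntegral.integral_const_mul, integral_pow]
  simp [smul_eq_mul]; push_cast; ring

lemma aux_phi_mono {p q : ℝ} {f : ℝ → ℝ} (hsm : StrictMonoOn (deriv f) (Ioo p q))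
    (hf : ContDiffOn ℝ 3 f (Ioo p q)) {x₀ : ℝ} (hx₀ : x₀ ∈ Ioo p q) :
    MonotoneOn (fun x => f x - f x₀ - deriv f x₀ * (x - x₀)) (Ico x₀ q) ∧
    AntitoneOn (fun x => f x - f x₀ - deriv f x₀ * (x - x₀)) (Ioc p x₀) := by
  have hD : ∀ y ∈ Ioo p q,
      HasDerivAt (fun z => f z - f x₀ - deriv f x₀ * (z - x₀)) (deriv f y - deriv f x₀) y := by
    intro y hy
    have hfd : HasDerivAt f (deriv f y) y :=
      ((hf.differentiableOn (by norm_num)).differentiableAt (isOpen_Ioo.mem_nhds hy)).hasDerivAt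
    have h1 := (hfd.sub_const (f x₀)).sub
      (((hasDerivAt_id y).sub_const x₀).const_mul (deriv f x₀))
    exact h1.congr_deriv (by ring)
  constructor
  · have hsub : Ico x₀ q ⊆ Ioo p q := fun x hx => ⟨lt_of_lt_of_le hx₀.1 hx.1, hx.2⟩
    refine monotoneOn_of_deriv_nonneg (convex_Ico x₀ q)
      (fun x hx => (hD x (hsub hx)).continuousAt.continuousWithinAt)
      (fun x hx => ?_) (fun x hx => ?_)
    · rw [interior_Ico] at hx
      exact (hD x (hsub (Ioo_subset_Ico_self hx))).differentiableAt.differentiableWithinAt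
    · rw [interior_Ico] at hx
      rw [(hD x (hsub (Ioo_subset_Ico_self hx))).deriv]
      have := hsm hx₀ (hsub (Ioo_subset_Ico_self hx)) hx.1
      linarith
  · have hsub : Ioc p x₀ ⊆ Ioo p q := fun x hx => ⟨hx.1, lt_of_le_of_lt hx.2 hx₀.2⟩
    refine antitoneOn_of_deriv_nonpos (convex_Ioc p x₀)
      (fun x hx => (hD x (hsub hx)).continuousAt.continuousWithinAt)
      (fun x hx => ?_) (fun x hx => ?_)
    · rw [interior_Ioc] at hx
      exact (hD x (hsub (Ioo_subset_Ioc_self hx))).differentiableAt.differentiableWithinAt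
    · rw [interior_Ioc] at hx
      rw [(hD x (hsub (Ioo_subset_Ioc_self hx))).deriv]
      have := hsm (hsub (Ioo_subset_Ioc_self hx)) hx₀ hx.2
      linarith

set_option maxHeartbeats 2000000 in
lemma key_lemma (hpq : p < q) (hf : ContDiffOn ℝ 3 f (Ioo p q))
    (hconv : ∀ x ∈ Ioo p q, 0 < iteratedDeriv 2 f x)
    {a : ℝ} (ha : 0 < a)
    (harea : ∀ x₀ ∈ Ioo p q, ∃ ε > 0, ∀ h : ℝ, 0 < h → h < ε →
      SP f (Ioo p q) x₀ h = a * (h * Real.sqrt (1 + (deriv f x₀) ^ 2)) ^ ((3 : ℝ) / 2))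
    {x₀ : ℝ} (hx₀ : x₀ ∈ Ioo p q) :
    iteratedDeriv 2 f x₀ = 32 / (9 * a ^ 2) := by
  have hc : 0 < iteratedDeriv 2 f x₀ := hconv x₀ hx₀
  set c := iteratedDeriv 2 f x₀ with hcdef
  have hsm := aux_strictMono_deriv hf hconv
  have claim : ∀ δ : ℝ, 0 < δ → δ < c → 32 / 9 ≤ a ^ 2 * (c + δ) ∧ a ^ 2 * (c - δ) ≤ 32 / 9 := by
    intro δ hδ hδc
    have hδc' : (0:ℝ) < c - δ := by linarith
    have hδc'' : (0:ℝ) < c + δ := by linarith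
    obtain ⟨η, hη, hsubI, htay⟩ := aux_taylor hf hx₀ hδ
    obtain ⟨ε, hε, hSP⟩ := harea x₀ hx₀
    set s := Real.sqrt (1 + (deriv f x₀) ^ 2) with hsdef
    have hs1 : (1:ℝ) ≤ s := by
      rw [hsdef, Real.le_sqrt' one_pos]
      nlinarith [sq_nonneg (deriv f x₀)]
    have hs : 0 < s := lt_of_lt_of_le one_pos hs1
    set h : ℝ := min (ε / 2) ((c - δ) * η ^ 2 / (8 * s)) with hhdef
    have hh : 0 < h := lt_min (by linarith) (by positivity)
    set d := h * s with hddef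
    have hd : 0 < d := mul_pos hh hs
    have hdsmall : d < (c - δ) * η ^ 2 / 4 := by
      have h1 : h ≤ (c - δ) * η ^ 2 / (8 * s) := min_le_right _ _
      have h2 : d ≤ (c - δ) * η ^ 2 / 8 := by
        rw [hddef]
        calc h * s ≤ (c - δ) * η ^ 2 / (8 * s) * s := by
              exact mul_le_mul_of_nonneg_right h1 hs.le
          _ = (c - δ) * η ^ 2 / 8 := by field_simp
      have hpos : 0 < (c - δ) * η ^ 2 := by positivity
      linarith
    have hhε : h < ε := lt_of_le_of_lt (min_le_left _ _) (by linarith)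
    set φ := fun x => f x - f x₀ - deriv f x₀ * (x - x₀) with hφ
    have hchord : ∀ x, chordLine f x₀ h x - f x = d - φ x := by
      intro x; rw [chordLine, hddef, hsdef]; simp only [hφ]; ring
    set E := {x ∈ Ioo p q | f x < chordLine f x₀ h x} with hE
    have hEeq : ∀ x, x ∈ E ↔ x ∈ Ioo p q ∧ φ x < d := by
      intro x
      constructor
      · rintro ⟨h1, h2⟩; exact ⟨h1, by linarith [hchord x]⟩
      · rintro ⟨h1, h2⟩; exact ⟨h1, by linarith [hchord x]⟩
    have hEopen : IsOpen E := by
      have hcont : ContinuousOn (fun x => chordLine f x₀ h x - f x) (Ioo p q) := by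
        apply ContinuousOn.sub _ (hf.continuousOn)
        apply Continuous.continuousOn
        unfold chordLine; fun_prop
      have heq : E = Ioo p q ∩ (fun x => chordLine f x₀ h x - f x) ⁻¹' Ioi 0 := by
        ext x
        simp only [hE, mem_setOf_eq, mem_inter_iff, mem_preimage, mem_Ioi, sub_pos]
      rw [heq]
      exact hcont.isOpen_inter_preimage isOpen_Ioo isOpen_Ioi
    have hEmeas : MeasurableSet E := hEopen.measurableSet
    set r₁ := Real.sqrt (2 * d / (c + δ)) with hr₁
    set r₂ := Real.sqrt (2 * d / (c - δ)) with hr₂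
    have hr₁sq : r₁ ^ 2 = 2 * d / (c + δ) := Real.sq_sqrt (by positivity)
    have hr₂sq : r₂ ^ 2 = 2 * d / (c - δ) := Real.sq_sqrt (by positivity)
    have hr₁pos : 0 < r₁ := Real.sqrt_pos.2 (by positivity)
    have hr₂pos : 0 < r₂ := Real.sqrt_pos.2 (by positivity)
    have hr₁₂ : r₁ ≤ r₂ := by
      apply Real.sqrt_le_sqrt
      apply div_le_div_of_nonneg_left (by positivity) hδc' (by linarith)
    have hr₂η : r₂ ≤ η := by
      rw [hr₂, show η = Real.sqrt (η ^ 2) from (Real.sqrt_sq hη.le).symm]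
      apply Real.sqrt_le_sqrt
      rw [div_le_iff₀ hδc']
      have hpos : 0 < (c - δ) * η ^ 2 := by positivity
      nlinarith [hdsmall, hpos]
    have hr₁η : r₁ ≤ η := le_trans hr₁₂ hr₂η
    have hmono := aux_phi_mono hsm hf hx₀
    -- E is inside the Taylor window
    have hEball : E ⊆ Ioo (x₀ - η) (x₀ + η) := by
      intro x hx
      obtain ⟨hxI, hxφ⟩ := (hEeq x).1 hx
      by_contra hcon
      simp only [mem_Ioo, not_and_or, not_lt] at hcon
      rcases hcon with hcon | hcon
      · have hmem : x₀ - η ∈ Icc (x₀ - η) (x₀ + η) := by constructor <;> linarith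
        have hIm : x₀ - η ∈ Ioc p x₀ := ⟨(hsubI hmem).1, by linarith⟩
        have hxm : x ∈ Ioc p x₀ := ⟨hxI.1, by linarith⟩
        have h1 : φ (x₀ - η) ≤ φ x := hmono.2 hxm hIm hcon
        have h2 := (htay (x₀ - η) hmem).1
        rw [show x₀ - η - x₀ = -η by ring] at h2
        simp only [hφ] at h1 h2 hxφ
        have hpos : 0 < (c - δ) * η ^ 2 := by positivity
        rw [hcdef] at hdsmall hδc'
        nlinarith [h1, h2, hxφ, hdsmall, hpos]
      · have hmem : x₀ + η ∈ Icc (x₀ - η) (x₀ + η) := by constructor <;> linarith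
        have hIm : x₀ + η ∈ Ico x₀ q := ⟨by linarith, (hsubI hmem).2⟩
        have hxm : x ∈ Ico x₀ q := ⟨by linarith, hxI.2⟩
        have h1 : φ (x₀ + η) ≤ φ x := hmono.1 hIm hxm hcon
        have h2 := (htay (x₀ + η) hmem).1
        rw [show x₀ + η - x₀ = η by ring] at h2
        simp only [hφ] at h1 h2 hxφ
        have hpos : 0 < (c - δ) * η ^ 2 := by positivity
        rw [hcdef] at hdsmall hδc'
        nlinarith [h1, h2, hxφ, hdsmall, hpos]
    set g₁ := fun x => d - (c + δ) / 2 * (x - x₀) ^ 2 with hg₁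
    set g₂ := fun x => d - (c - δ) / 2 * (x - x₀) ^ 2 with hg₂
    have hE₁sub : Ioo (x₀ - r₁) (x₀ + r₁) ⊆ E := by
      intro x hx
      have habs : |x - x₀| < r₁ := abs_lt.2 ⟨by linarith [hx.1], by linarith [hx.2]⟩
      have habs' := abs_lt.1 habs
      have hxIcc : x ∈ Icc (x₀ - η) (x₀ + η) := by
        constructor <;> [linarith [habs'.1]; linarith [habs'.2]]
      refine (hEeq x).2 ⟨hsubI hxIcc, ?_⟩
      have h1 := (htay x hxIcc).2
      have hsq2 : (x - x₀) ^ 2 < r₁ ^ 2 := by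
        rw [← sq_abs]; exact pow_lt_pow_left₀ habs (abs_nonneg _) (by norm_num)
      rw [hr₁sq] at hsq2
      simp only [hφ]
      have : (c + δ) / 2 * (x - x₀) ^ 2 < d := by
        rw [lt_div_iff₀ hδc''] at hsq2; linarith
      linarith
    have hEsub₂ : E ⊆ Ioo (x₀ - r₂) (x₀ + r₂) := by
      intro x hx
      obtain ⟨hxI, hxφ⟩ := (hEeq x).1 hx
      have hxIcc : x ∈ Icc (x₀ - η) (x₀ + η) := Ioo_subset_Icc_self (hEball hx)
      have h1 := (htay x hxIcc).1
      have hsq2 : (x - x₀) ^ 2 < r₂ ^ 2 := by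
        rw [hr₂sq, lt_div_iff₀ hδc']
        simp only [hφ] at h1 hxφ
        linarith
      have habs : |x - x₀| < r₂ := by
        have := lt_of_pow_lt_pow_left₀ 2 hr₂pos.le (by rw [sq_abs]; exact hsq2)
        exact this
      have habs' := abs_lt.1 habs
      constructor <;> [linarith [habs'.1]; linarith [habs'.2]]
    -- integrability
    have hφcont : ContinuousOn (fun x => d - φ x) (Icc (x₀ - η) (x₀ + η)) := by
      apply ContinuousOn.sub continuousOn_const
      simp only [hφ]
      exact ((hf.continuousOn.mono hsubI).sub continuousOn_const).sub
        (Continuous.continuousOn (by fun_prop))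
    have hint_g : IntegrableOn (fun x => d - φ x) E volume :=
      (hφcont.integrableOn_compact isCompact_Icc).mono_set
        (subset_trans hEball Ioo_subset_Icc_self)
    have hint_g₁ : IntegrableOn g₁ (Ioo (x₀ - r₁) (x₀ + r₁)) volume := by
      have : Continuous g₁ := by simp only [hg₁]; fun_prop
      exact (this.continuousOn.integrableOn_compact isCompact_Icc).mono_set Ioo_subset_Icc_self
    have hint_g₂ : IntegrableOn g₂ (Ioo (x₀ - r₂) (x₀ + r₂)) volume := by
      have : Continuous g₂ := by simp only [hg₂]; fun_prop
      exact (this.continuousOn.integrableOn_compact isCompact_Icc).mono_set Ioo_subset_Icc_self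
    -- lower chain
    have step1 : ∫ x in Ioo (x₀ - r₁) (x₀ + r₁), g₁ x
        ≤ ∫ x in Ioo (x₀ - r₁) (x₀ + r₁), (d - φ x) := by
      refine setIntegral_mono_on hint_g₁ (hint_g.mono_set hE₁sub) measurableSet_Ioo ?_
      intro x hx
      have habs : |x - x₀| < r₁ := abs_lt.2 ⟨by linarith [hx.1], by linarith [hx.2]⟩
      have habs' := abs_lt.1 habs
      have hxIcc : x ∈ Icc (x₀ - η) (x₀ + η) := by
        constructor <;> [linarith [habs'.1]; linarith [habs'.2]]
      have := (htay x hxIcc).2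
      simp only [hg₁, hφ]
      linarith
    have step2 : ∫ x in Ioo (x₀ - r₁) (x₀ + r₁), (d - φ x) ≤ ∫ x in E, (d - φ x) := by
      refine setIntegral_mono_set hint_g ?_ (HasSubset.Subset.eventuallyLE hE₁sub)
      refine Filter.Eventually.mono (ae_restrict_mem hEmeas) ?_
      intro x hx
      simp only [Pi.zero_apply]
      have := ((hEeq x).1 hx).2
      linarith
    -- upper chain
    have step3 : ∫ x in E, (d - φ x) ≤ ∫ x in E, g₂ x := by
      refine setIntegral_mono_on hint_g (hint_g₂.mono_set hEsub₂) hEmeas ?_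
      intro x hx
      have hxIcc : x ∈ Icc (x₀ - η) (x₀ + η) := Ioo_subset_Icc_self (hEball hx)
      have := (htay x hxIcc).1
      simp only [hg₂, hφ]
      linarith
    have step4 : ∫ x in E, g₂ x ≤ ∫ x in Ioo (x₀ - r₂) (x₀ + r₂), g₂ x := by
      refine setIntegral_mono_set hint_g₂ ?_ (HasSubset.Subset.eventuallyLE hEsub₂)
      refine Filter.Eventually.mono (ae_restrict_mem measurableSet_Ioo) ?_
      intro x hx
      simp only [Pi.zero_apply]
      have habs : |x - x₀| < r₂ := abs_lt.2 ⟨by linarith [hx.1], by linarith [hx.2]⟩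
      have hsq2 : (x - x₀) ^ 2 < r₂ ^ 2 := by
        rw [← sq_abs]; exact pow_lt_pow_left₀ habs (abs_nonneg _) (by norm_num)
      rw [hr₂sq, lt_div_iff₀ hδc'] at hsq2
      simp only [hg₂]
      linarith
    have hval₁ : ∫ x in Ioo (x₀ - r₁) (x₀ + r₁), g₁ x = 2 * d * r₁ - (c + δ) * r₁ ^ 3 / 3 :=
      aux_integral x₀ d (c + δ) r₁ hr₁pos.le
    have hval₂ : ∫ x in Ioo (x₀ - r₂) (x₀ + r₂), g₂ x = 2 * d * r₂ - (c - δ) * r₂ ^ 3 / 3 :=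
      aux_integral x₀ d (c - δ) r₂ hr₂pos.le
    -- SP value
    have hSPval : ∫ x in E, (d - φ x) = a * d ^ ((3:ℝ) / 2) := by
      have h0 := hSP h hh hhε
      rw [SP] at h0
      rw [show (fun x => chordLine f x₀ h x - f x) = (fun x => d - φ x) from funext hchord] at h0
      rw [← hE] at h0
      rw [h0, ← hddef]
    have hd32 : d ^ ((3:ℝ) / 2) = d * Real.sqrt d := by
      rw [show (3:ℝ)/2 = 1 + 1/2 by norm_num, Real.rpow_add hd, Real.rpow_one,
        ← Real.sqrt_eq_rpow]
    have hsd : 0 < Real.sqrt d := Real.sqrt_pos.2 hd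
    have hr₁eq : r₁ = Real.sqrt d * Real.sqrt (2 / (c + δ)) := by
      rw [hr₁, ← Real.sqrt_mul hd.le]; congr 1; ring
    have hr₂eq : r₂ = Real.sqrt d * Real.sqrt (2 / (c - δ)) := by
      rw [hr₂, ← Real.sqrt_mul hd.le]; congr 1; ring
    have hcube₁ : 2 * d * r₁ - (c + δ) * r₁ ^ 3 / 3 = 4 / 3 * (d * r₁) := by
      have hcs : (c + δ) * r₁ ^ 2 = 2 * d := by rw [hr₁sq]; field_simp
      linear_combination (-r₁ / 3) * hcs
    have hcube₂ : 2 * d * r₂ - (c - δ) * r₂ ^ 3 / 3 = 4 / 3 * (d * r₂) := by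
      have hcs : (c - δ) * r₂ ^ 2 = 2 * d := by rw [hr₂sq]; field_simp
      linear_combination (-r₂ / 3) * hcs
    -- combine
    have hlow : 4 / 3 * (d * r₁) ≤ a * (d * Real.sqrt d) := by
      rw [← hcube₁, ← hval₁, ← hd32, ← hSPval]; linarith
    have hhigh : a * (d * Real.sqrt d) ≤ 4 / 3 * (d * r₂) := by
      rw [← hcube₂, ← hval₂, ← hd32, ← hSPval]; linarith
    have hpos : 0 < d * Real.sqrt d := by positivity
    have hineq1 : 4 / 3 * Real.sqrt (2 / (c + δ)) ≤ a := by
      have h' : 4 / 3 * Real.sqrt (2 / (c + δ)) * (d * Real.sqrt d)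
          ≤ a * (d * Real.sqrt d) := by
        rw [hr₁eq] at hlow; linarith [hlow]
      exact le_of_mul_le_mul_right h' hpos
    have hineq2 : a ≤ 4 / 3 * Real.sqrt (2 / (c - δ)) := by
      have h' : a * (d * Real.sqrt d)
          ≤ 4 / 3 * Real.sqrt (2 / (c - δ)) * (d * Real.sqrt d) := by
        rw [hr₂eq] at hhigh; linarith [hhigh]
      exact le_of_mul_le_mul_right h' hpos
    constructor
    · have hu : (0:ℝ) ≤ 2 / (c + δ) := by positivity
      have h2 := Real.sq_sqrt hu
      have hstep : (4 / 3 * Real.sqrt (2 / (c + δ))) ^ 2 ≤ a ^ 2 :=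
        pow_le_pow_left₀ (by positivity) hineq1 2
      have heq : (4 / 3 * Real.sqrt (2 / (c + δ))) ^ 2 = 16 / 9 * (2 / (c + δ)) := by
        rw [mul_pow, h2]; ring
      rw [heq] at hstep
      calc (32:ℝ) / 9 = 16 / 9 * (2 / (c + δ)) * (c + δ) := by field_simp; ring
        _ ≤ a ^ 2 * (c + δ) := mul_le_mul_of_nonneg_right hstep hδc''.le
    · have hu : (0:ℝ) ≤ 2 / (c - δ) := by positivity
      have h2 := Real.sq_sqrt hu
      have hstep : a ^ 2 ≤ (4 / 3 * Real.sqrt (2 / (c - δ))) ^ 2 :=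
        pow_le_pow_left₀ ha.le hineq2 2
      have heq : (4 / 3 * Real.sqrt (2 / (c - δ))) ^ 2 = 16 / 9 * (2 / (c - δ)) := by
        rw [mul_pow, h2]; ring
      rw [heq] at hstep
      calc a ^ 2 * (c - δ) ≤ 16 / 9 * (2 / (c - δ)) * (c - δ) :=
            mul_le_mul_of_nonneg_right hstep hδc'.le
        _ = 32 / 9 := by field_simp; ring
  -- conclude c = 32 / (9 a²)
  have ha2 : (0:ℝ) < a ^ 2 := by positivity
  have h1 : a ^ 2 * c ≤ 32 / 9 := by
    refine le_of_forall_pos_le_add (fun ε hε => ?_)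
    set δ := min (c / 2) (ε / a ^ 2) with hδdef
    have hδ : 0 < δ := lt_min (by linarith) (by positivity)
    have hδc : δ < c := lt_of_le_of_lt (min_le_left _ _) (by linarith)
    have := (claim δ hδ hδc).2
    have hδε : a ^ 2 * δ ≤ ε := by
      have : δ ≤ ε / a ^ 2 := min_le_right _ _
      calc a ^ 2 * δ ≤ a ^ 2 * (ε / a ^ 2) := mul_le_mul_of_nonneg_left this (by positivity)
        _ = ε := by field_simp
    nlinarith [this, hδε]
  have h2 : 32 / 9 ≤ a ^ 2 * c := by
    by_contra hcon
    push_neg at hcon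
    set ε := (32 / 9 - a ^ 2 * c) / 2 with hεdef
    have hε : 0 < ε := by simp only [hεdef]; linarith
    set δ := min (c / 2) (ε / a ^ 2) with hδdef
    have hδ : 0 < δ := lt_min (by linarith) (by positivity)
    have hδc : δ < c := lt_of_le_of_lt (min_le_left _ _) (by linarith)
    have := (claim δ hδ hδc).1
    have hδε : a ^ 2 * δ ≤ ε := by
      have : δ ≤ ε / a ^ 2 := min_le_right _ _
      calc a ^ 2 * δ ≤ a ^ 2 * (ε / a ^ 2) := mul_le_mul_of_nonneg_left this (by positivity)
        _ = ε := by field_simp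
    simp only [hεdef] at hδε
    nlinarith [this, hδε, hcon]
  have : a ^ 2 * c = 32 / 9 := le_antisymm h1 h2
  field_simp
  linarith

theorem quadratic_of_archimedean_area (p q : ℝ) (hpq : p < q) (f : ℝ → ℝ)
    (hf : ContDiffOn ℝ 3 f (Set.Ioo p q))
    (hconv : ∀ x ∈ Set.Ioo p q, 0 < iteratedDeriv 2 f x)
    (a : ℝ) (ha : 0 < a)
    (harea : ∀ x₀ ∈ Set.Ioo p q, ∃ ε > 0, ∀ h : ℝ, 0 < h → h < ε →
      SP f (Set.Ioo p q) x₀ h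
        = a * (h * Real.sqrt (1 + (deriv f x₀) ^ 2)) ^ ((3 : ℝ) / 2)) :
    (∃ c : ℝ, ∀ x ∈ Set.Ioo p q, iteratedDeriv 2 f x = c) ∧
    ∃ A B C : ℝ, ∀ x ∈ Set.Ioo p q, f x = A * x ^ 2 + B * x + C := by
  have hkey : ∀ x ∈ Set.Ioo p q, iteratedDeriv 2 f x = 32 / (9 * a ^ 2) := fun x hx =>
    key_lemma hpq hf hconv ha harea hx
  set c : ℝ := 32 / (9 * a ^ 2) with hcdef
  refine ⟨⟨c, hkey⟩, ?_⟩
  set x₁ := (p + q) / 2 with hx₁def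
  have hx₁ : x₁ ∈ Set.Ioo p q := by
    constructor <;> simp only [hx₁def] <;> linarith
  set B := deriv f x₁ - c * x₁ with hBdef
  have hBeq : ∀ x ∈ Set.Ioo p q, deriv f x - c * x = B := by
    intro x hx
    have hD : ∀ y ∈ Set.Ioo p q, HasDerivAt (fun z => deriv f z - c * z) 0 y := by
      intro y hy
      have h1 := (aux_hasDerivAt_deriv hf hy).sub ((hasDerivAt_id y).const_mul c)
      exact h1.congr_deriv (by rw [hkey y hy]; simp)
    have hdiff : DifferentiableOn ℝ (fun z => deriv f z - c * z) (Set.Ioo p q) := fun y hy =>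
      (hD y hy).differentiableAt.differentiableWithinAt
    have hzero : ∀ y ∈ Set.Ioo p q,
        fderivWithin ℝ (fun z => deriv f z - c * z) (Set.Ioo p q) y = 0 := by
      intro y hy
      rw [fderivWithin_of_isOpen isOpen_Ioo hy, (hD y hy).hasFDerivAt.fderiv]
      ext z; simp
    exact (convex_Ioo p q).is_const_of_fderivWithin_eq_zero hdiff hzero hx hx₁
  set C := f x₁ - (c / 2 * x₁ ^ 2 + B * x₁) with hCdef
  refine ⟨c / 2, B, C, fun x hx => ?_⟩
  have hD2 : ∀ y ∈ Set.Ioo p q,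
      HasDerivAt (fun z => f z - (c / 2 * z ^ 2 + B * z)) 0 y := by
    intro y hy
    have h1 := (aux_hasDerivAt hf hy).sub
      (((hasDerivAt_pow 2 y).const_mul (c / 2)).add ((hasDerivAt_id y).const_mul B))
    simp only [id_eq, pow_one, Nat.cast_ofNat] at h1
    exact h1.congr_deriv (by
      have := hBeq y hy
      norm_num
      linarith)
  have hdiff2 : DifferentiableOn ℝ (fun z => f z - (c / 2 * z ^ 2 + B * z)) (Set.Ioo p q) :=
    fun y hy => (hD2 y hy).differentiableAt.differentiableWithinAt
  have hzero2 : ∀ y ∈ Set.Ioo p q,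
      fderivWithin ℝ (fun z => f z - (c / 2 * z ^ 2 + B * z)) (Set.Ioo p q) y = 0 := by
    intro y hy
    rw [fderivWithin_of_isOpen isOpen_Ioo hy, (hD2 y hy).hasFDerivAt.fderiv]
    ext z; simp
  have := (convex_Ioo p q).is_const_of_fderivWithin_eq_zero hdiff2 hzero2 hx hx₁
  rw [hCdef]
  linarith
end

section
/- If S : (0, ε) → ℝ is differentiable with S'(h) = L(h), L is continuous and positive, S(h) = (2/3) h L(h) for all h in (0, ε), and lim_{h→0+} L(h)/√h exists and equals c > 0, then L(h) = c √h for all h in (0, ε). -/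
open Filter Topology

theorem chord_length_sqrt_of_two_thirds (ε c : ℝ) (hε : 0 < ε) (hc : 0 < c)
    (S L : ℝ → ℝ)
    (hS : ∀ h ∈ Set.Ioo 0 ε, HasDerivAt S (L h) h)
    (hLcont : ContinuousOn L (Set.Ioo 0 ε))
    (hLdiff : DifferentiableOn ℝ L (Set.Ioo 0 ε))
    (hLpos : ∀ h ∈ Set.Ioo 0 ε, 0 < L h)
    (hSL : ∀ h ∈ Set.Ioo 0 ε, S h = (2 / 3) * h * L h)
    (hlim : Tendsto (fun h => L h / Real.sqrt h) (𝓝[>] 0) (𝓝 c)) :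
    ∀ h ∈ Set.Ioo 0 ε, L h = c * Real.sqrt h := by
  have hopen : IsOpen (Set.Ioo (0:ℝ) ε) := isOpen_Ioo
  set g : ℝ → ℝ := fun h => L h / Real.sqrt h with hg
  -- key: L' x = L x / (2 x) on Ioo
  have hL' : ∀ x ∈ Set.Ioo (0:ℝ) ε, HasDerivAt L (L x / (2 * x)) x := by
    intro x hx
    have hxnn : x ∈ Set.Ioo (0:ℝ) ε := hx
    have hx0 : 0 < x := hx.1
    have hmem : Set.Ioo (0:ℝ) ε ∈ 𝓝 x := hopen.mem_nhds hx
    have hdL : DifferentiableAt ℝ L x :=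
      (hLdiff x hx).differentiableAt hmem
    have hdL' : HasDerivAt L (deriv L x) x := hdL.hasDerivAt
    have hprod : HasDerivAt (fun h => (2/3) * h * L h)
        ((2/3) * 1 * L x + (2/3) * x * deriv L x) x := by
      have h1 : HasDerivAt (fun h : ℝ => (2/3) * h) ((2/3) * 1) x :=
        (hasDerivAt_id x).const_mul (2/3)
      exact h1.mul hdL'
    have heq : S =ᶠ[𝓝 x] fun h => (2/3) * h * L h := by
      filter_upwards [hmem] with y hy using hSL y hy
    have hS' : HasDerivAt (fun h => (2/3) * h * L h) (L x) x :=
      (hS x hx).congr_of_eventuallyEq heq.symm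
    have huniq : L x = (2/3) * 1 * L x + (2/3) * x * deriv L x :=
      hS'.unique hprod
    have : deriv L x = L x / (2 * x) := by
      field_simp at huniq ⊢
      linarith
    rwa [this] at hdL'
  -- g has zero derivative on Ioo
  have hg' : ∀ x ∈ Set.Ioo (0:ℝ) ε, HasDerivAt g 0 x := by
    intro x hx
    have hx0 : 0 < x := hx.1
    have hs0 : Real.sqrt x ≠ 0 := (Real.sqrt_pos.mpr hx0).ne'
    have hsq : HasDerivAt Real.sqrt (1 / (2 * Real.sqrt x)) x :=
      Real.hasDerivAt_sqrt hx0.ne'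
    have hdiv : HasDerivAt g
        ((L x / (2 * x) * Real.sqrt x - L x * (1 / (2 * Real.sqrt x))) /
          (Real.sqrt x)^2) x := (hL' x hx).div hsq hs0
    have : (L x / (2 * x) * Real.sqrt x - L x * (1 / (2 * Real.sqrt x))) /
          (Real.sqrt x)^2 = 0 := by
      rw [div_eq_zero_iff]; left
      have h2 : Real.sqrt x * Real.sqrt x = x := Real.mul_self_sqrt hx0.le
      field_simp
      linear_combination L x * h2
    rwa [this] at hdiv
  -- g is constant on Ioo: any two points have equal values
  have hconst : ∀ x ∈ Set.Ioo (0:ℝ) ε, ∀ y ∈ Set.Ioo (0:ℝ) ε, g x = g y := by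
    have key : ∀ x ∈ Set.Ioo (0:ℝ) ε, ∀ y ∈ Set.Ioo (0:ℝ) ε, x ≤ y → g x = g y := by
      intro x hx y hy hxy
      have hsub : Set.Icc x y ⊆ Set.Ioo 0 ε := fun z hz =>
        ⟨lt_of_lt_of_le hx.1 hz.1, lt_of_le_of_lt hz.2 hy.2⟩
      have hcont : ContinuousOn g (Set.Icc x y) := fun z hz =>
        ((hg' z (hsub hz)).continuousAt).continuousWithinAt
      have hderiv : ∀ z ∈ Set.Ico x y, HasDerivWithinAt g 0 (Set.Ici z) z :=
        fun z hz => (hg' z (hsub ⟨hz.1, hz.2.le⟩)).hasDerivWithinAt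
      exact (constant_of_has_deriv_right_zero hcont hderiv y
        (Set.right_mem_Icc.mpr hxy)).symm ▸
        (constant_of_has_deriv_right_zero hcont hderiv y (Set.right_mem_Icc.mpr hxy)).symm
    intro x hx y hy
    rcases le_total x y with h | h
    · exact key x hx y hy h
    · exact (key y hy x hx h).symm
  -- identify the constant with c using the limit
  intro h hh
  have hval : Tendsto g (𝓝[>] (0:ℝ)) (𝓝 (g h)) := by
    have hev : g =ᶠ[𝓝[>] (0:ℝ)] fun _ => g h := by
      have hioo : Set.Ioo (0:ℝ) ε ∈ 𝓝[>] (0:ℝ) :=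
        Ioo_mem_nhdsGT_of_mem ⟨le_refl 0, hε⟩
      filter_upwards [hioo] with y hy using hconst y hy h hh
    exact Tendsto.congr' hev.symm tendsto_const_nhds
  have : g h = c := tendsto_nhds_unique hval hlim
  have hs0 : Real.sqrt h ≠ 0 := (Real.sqrt_pos.mpr hh.1).ne'
  simp only [hg] at this; field_simp at this
  linarith [this]
end

section
/- There is no C^2 function f on an open interval containing 0 with f(0) = 0, f'(0) = 0, f''(0) > 0 satisfying 2x^2 f''(x) − x f'(x) + f(x) = 0 for all x in the interval. -/
open Filter Set Topology

theorem no_convex_solution_of_ode :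
    ¬ ∃ (p q : ℝ) (f : ℝ → ℝ), p < 0 ∧ 0 < q ∧
      ContDiffOn ℝ 2 f (Set.Ioo p q) ∧
      f 0 = 0 ∧ deriv f 0 = 0 ∧ 0 < iteratedDeriv 2 f 0 ∧
      ∀ x ∈ Set.Ioo p q,
        2 * x ^ 2 * iteratedDeriv 2 f x - x * deriv f x + f x = 0 := by
  rintro ⟨p, q, f, hp, hq, hcd, hf0, hf'0, hc, hode⟩
  set s : Set ℝ := Set.Ioo p q with hs
  have hso : IsOpen s := isOpen_Ioo
  have h0s : (0:ℝ) ∈ s := ⟨hp, hq⟩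
  have hsnhds : s ∈ 𝓝 (0:ℝ) := hso.mem_nhds h0s
  have hit2 : iteratedDeriv 2 f = deriv (deriv f) := by
    rw [show (2:ℕ) = 1 + 1 from rfl, iteratedDeriv_succ, iteratedDeriv_one]
  -- unpack regularity
  have h1 : DifferentiableOn ℝ f s ∧ ContDiffOn ℝ 1 (deriv f) s := by
    have := (contDiffOn_succ_iff_deriv_of_isOpen (n := 1) (f := f) hso).mp
      (by norm_num at hcd ⊢; exact hcd)
    exact ⟨this.1, this.2.2⟩
  have h2 : DifferentiableOn ℝ (deriv f) s ∧ ContDiffOn ℝ 0 (deriv (deriv f)) s := by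
    have := (contDiffOn_succ_iff_deriv_of_isOpen (n := 0) (f := deriv f) hso).mp
      (by norm_num; exact h1.2)
    exact ⟨this.1, this.2.2⟩
  have hcont2 : ContinuousOn (deriv (deriv f)) s := contDiffOn_zero.mp h2.2
  set c : ℝ := iteratedDeriv 2 f 0 with hcdef
  have hc0 : c = deriv (deriv f) 0 := by rw [hcdef, hit2]
  -- HasDerivAt (deriv f) c 0
  have hd2 : HasDerivAt (deriv f) c 0 := by
    rw [hc0]
    exact ((h2.1 0 h0s).differentiableAt hsnhds).hasDerivAt
  -- f'(x)/x → c as x → 0, x ≠ 0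
  have hslope : Tendsto (fun x => deriv f x / x) (𝓝[≠] (0:ℝ)) (𝓝 c) := by
    have h := hasDerivAt_iff_tendsto_slope.mp hd2
    refine h.congr' ?_
    filter_upwards [self_mem_nhdsWithin] with x hx
    simp [slope, hf'0, hx, div_eq_inv_mul]
  -- f(x)/x² → c/2 by L'Hôpital
  have hfx2 : Tendsto (fun x => f x / x ^ 2) (𝓝[≠] (0:ℝ)) (𝓝 (c / 2)) := by
    apply deriv.lhopital_zero_nhdsNE
    · filter_upwards [nhdsWithin_le_nhds hsnhds] with x hx
      exact (h1.1 x hx).differentiableAt (hso.mem_nhds hx)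
    · filter_upwards [self_mem_nhdsWithin] with x hx
      have : deriv (fun y : ℝ => y ^ 2) x = 2 * x := by
        simp [deriv_pow]
      rw [this]
      exact mul_ne_zero two_ne_zero hx
    · have hcf : ContinuousAt f 0 :=
        (h1.1 0 h0s).differentiableAt hsnhds |>.continuousAt
      have := hcf.tendsto
      rw [hf0] at this
      exact this.mono_left nhdsWithin_le_nhds
    · have : Tendsto (fun x : ℝ => x ^ 2) (𝓝 0) (𝓝 (0 ^ 2)) := (continuous_pow 2).tendsto 0
      simpa using this.mono_left nhdsWithin_le_nhds
    · have hderiv2 : (fun x : ℝ => deriv f x / deriv (fun y : ℝ => y ^ 2) x)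
          =ᶠ[𝓝[≠] (0:ℝ)] fun x => (deriv f x / x) / 2 := by
        filter_upwards [self_mem_nhdsWithin] with x hx
        simp [deriv_pow]
        ring
      rw [tendsto_congr' hderiv2]
      exact hslope.div_const 2
  -- f''(x) → c as x → 0 within s
  have hf''tendsto : Tendsto (deriv (deriv f)) (𝓝[≠] (0:ℝ)) (𝓝 c) := by
    have h1' : Tendsto (deriv (deriv f)) (𝓝[s] (0:ℝ)) (𝓝 c) := by
      rw [hc0]
      exact (hcont2 0 h0s).tendsto
    refine h1'.mono_left ?_
    rw [← nhdsWithin_inter_of_mem' (nhdsWithin_le_nhds hsnhds)]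
    exact nhdsWithin_mono _ inter_subset_right
  -- From the ODE: 2 f''(x) = f'(x)/x − f(x)/x² for x ∈ s, x ≠ 0
  have hkey : Tendsto (fun x => 2 * deriv (deriv f) x) (𝓝[≠] (0:ℝ)) (𝓝 (c - c / 2)) := by
    have heq : (fun x => deriv f x / x - f x / x ^ 2)
        =ᶠ[𝓝[≠] (0:ℝ)] fun x => 2 * deriv (deriv f) x := by
      filter_upwards [self_mem_nhdsWithin, nhdsWithin_le_nhds hsnhds] with x hx hxs
      have hode' := hode x hxs
      rw [hit2] at hode'
      have hx2 : x ^ 2 ≠ 0 := pow_ne_zero 2 hx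
      rw [pow_two, div_sub_div _ _ hx (mul_ne_zero hx hx), div_eq_iff (mul_ne_zero hx (mul_ne_zero hx hx))]
      linear_combination -x * hode'
    rw [← tendsto_congr' heq]
    exact hslope.sub hfx2
  have hkey2 : Tendsto (fun x => 2 * deriv (deriv f) x) (𝓝[≠] (0:ℝ)) (𝓝 (2 * c)) :=
    hf''tendsto.const_mul 2
  have : (2 : ℝ) * c = c - c / 2 :=
    tendsto_nhds_unique hkey2 hkey
  linarith
end
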